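/- In the ring E = ℂ[[x,y]]/(xy), the intersection of the ideals generated by the classes of y and of x + y equals the ideal generated by the classes of xy and y², and consequently the colon ideal ((xy, y²) : (y)) in E equals the ideal generated by the classes of x and y. -/

import Mathlib

set_option synthInstance.maxHeartbeats 1000000
set_option maxHeartbeats 1000000

open MvPowerSeries

noncomputable def auxQ : MvPowerSeries (Fin 2) ℂ →+*
    MvPowerSeries (Fin 2) ℂ ⧸ Ideal.span {(X 0 * X 1 : MvPowerSeries (Fin 2) ℂ)} :=
  Ideal.Quotient.mk (Ideal.span {(X 0 * X 1 : MvPowerSeries (Fin 2) ℂ)})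

lemma auxQ_zero : auxQ (X 0 * X 1) = 0 := by
  rw [auxQ, Ideal.Quotient.eq_zero_iff_mem]
  exact Ideal.mem_span_singleton_self _

lemma auxQ_mem {f : MvPowerSeries (Fin 2) ℂ} (hf : auxQ f = 0) :
    ∃ h, f = X 0 * X 1 * h := by
  rw [auxQ, Ideal.Quotient.eq_zero_iff_mem, Ideal.mem_span_singleton] at hf
  exact hf

lemma auxQ_surj : Function.Surjective auxQ := Ideal.Quotient.mk_surjective

lemma auxX1_ne : (X 1 : MvPowerSeries (Fin 2) ℂ) ≠ 0 := by
  intro h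
  have := congrArg (MvPowerSeries.coeff (R := ℂ) (Finsupp.single (1 : Fin 2) 1)) h
  rw [MvPowerSeries.coeff_index_single_self_X, map_zero] at this
  exact one_ne_zero this

/-- If `g * X 0 = X 1 * w` in `ℂ[[x,y]]`, then `X 1 ∣ g`. -/
lemma aux_X1_dvd {g w : MvPowerSeries (Fin 2) ℂ}
    (h : g * X 0 = X 1 * w) : (X 1 : MvPowerSeries (Fin 2) ℂ) ∣ g := by
  rw [MvPowerSeries.X_dvd_iff]
  intro m hm
  have h1 : (MvPowerSeries.coeff (R := ℂ) (m + Finsupp.single (0 : Fin 2) 1)) (g * X 0)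
      = MvPowerSeries.coeff (R := ℂ) m g := by
    rw [MvPowerSeries.X_def, MvPowerSeries.coeff_add_mul_monomial, mul_one]
  have h2 : (MvPowerSeries.coeff (R := ℂ) (m + Finsupp.single (0 : Fin 2) 1)) (X 1 * w) = 0 := by
    have hd : (X 1 : MvPowerSeries (Fin 2) ℂ) ∣ X 1 * w := dvd_mul_right _ _
    rw [MvPowerSeries.X_dvd_iff] at hd
    exact hd _ (by simp [hm])
  rw [← h1, h, h2]

lemma aux_pair : Ideal.span {auxQ (X 0 * X 1), auxQ (X 1 ^ 2)}
    = Ideal.span {auxQ (X 1 ^ 2)} := by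
  rw [auxQ_zero, show ({(0 : MvPowerSeries (Fin 2) ℂ ⧸ Ideal.span {(X 0 * X 1 : MvPowerSeries (Fin 2) ℂ)}), auxQ (X 1 ^ 2)} : Set _) = insert 0 {auxQ (X 1 ^ 2)} from rfl,
    Ideal.span_insert, Ideal.span_singleton_eq_bot.mpr rfl, bot_sup_eq]

lemma aux_part1 : Ideal.span {auxQ (X 1)} ⊓ Ideal.span {auxQ (X 0 + X 1)} =
    Ideal.span {auxQ (X 0 * X 1), auxQ (X 1 ^ 2)} := by
  rw [aux_pair]
  apply le_antisymm
  · rintro z ⟨hz1, hz2⟩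
    rw [SetLike.mem_coe, Ideal.mem_span_singleton] at hz1 hz2
    obtain ⟨u, hu⟩ := hz1
    obtain ⟨v, hv⟩ := hz2
    obtain ⟨f, rfl⟩ := auxQ_surj u
    obtain ⟨g, rfl⟩ := auxQ_surj v
    have he : auxQ (X 1 * f - (X 0 + X 1) * g) = 0 := by
      rw [map_sub, map_mul, map_mul, ← hu, ← hv, sub_self]
    obtain ⟨h, hh⟩ := auxQ_mem he
    have hdvd : (X 1 : MvPowerSeries (Fin 2) ℂ) ∣ g := by
      apply aux_X1_dvd (w := f - g - X 0 * h)
      linear_combination -hh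
    obtain ⟨g', rfl⟩ := hdvd
    have hf : f = (X 0 + X 1) * g' + X 0 * h := by
      apply mul_left_cancel₀ auxX1_ne
      linear_combination hh
    rw [Ideal.mem_span_singleton]
    refine ⟨auxQ g', ?_⟩
    rw [hu, hf]
    have : (X 1 : MvPowerSeries (Fin 2) ℂ) * ((X 0 + X 1) * g' + X 0 * h)
        = X 1 ^ 2 * g' + X 0 * X 1 * (g' + h) := by ring
    rw [← map_mul, this, map_add, map_mul, map_mul, auxQ_zero, zero_mul, add_zero]
  · rw [Ideal.span_singleton_le_iff_mem]
    constructor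
    · rw [SetLike.mem_coe, Ideal.mem_span_singleton]
      exact ⟨auxQ (X 1), by rw [← map_mul]; ring_nf⟩
    · rw [SetLike.mem_coe, Ideal.mem_span_singleton]
      refine ⟨auxQ (X 1), ?_⟩
      have : auxQ (X 1 ^ 2) = auxQ ((X 0 + X 1) * X 1) - auxQ (X 0 * X 1) := by
        rw [← map_sub]; ring_nf
      rw [this, auxQ_zero, sub_zero, map_mul]

lemma aux_part2 : Submodule.colon (Ideal.span {auxQ (X 0 * X 1), auxQ (X 1 ^ 2)})
    (Ideal.span {auxQ (X 1)}) = Ideal.span {auxQ (X 0), auxQ (X 1)} := by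
  apply le_antisymm
  · intro r hr
    have h1 : r • auxQ (X 1) ∈ Ideal.span {auxQ (X 0 * X 1), auxQ (X 1 ^ 2)} :=
      Submodule.mem_colon.mp hr _ (Ideal.mem_span_singleton_self _)
    rw [aux_pair, smul_eq_mul, Ideal.mem_span_singleton] at h1
    obtain ⟨c, hc⟩ := h1
    obtain ⟨f, rfl⟩ := auxQ_surj r
    obtain ⟨d, rfl⟩ := auxQ_surj c
    have he : auxQ (f * X 1 - X 1 ^ 2 * d) = 0 := by
      rw [map_sub, map_mul, map_mul, ← hc, sub_self]
    obtain ⟨h, hh⟩ := auxQ_mem he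
    have hf : f = X 1 * d + X 0 * h := by
      apply mul_right_cancel₀ auxX1_ne
      linear_combination hh
    rw [Ideal.mem_span_pair]
    refine ⟨auxQ h, auxQ d, ?_⟩
    rw [← map_mul, ← map_mul, ← map_add, hf]
    congr 1
    ring
  · rw [Ideal.span_le]
    rintro z hz
    simp only [Set.mem_insert_iff, Set.mem_singleton_iff] at hz
    rw [SetLike.mem_coe, Submodule.mem_colon]
    intro p hp
    rw [SetLike.mem_coe, Ideal.mem_span_singleton] at hp
    obtain ⟨c, hc⟩ := hp
    rcases hz with rfl | rfl
    · have : auxQ (X 0) • p = c * auxQ (X 0 * X 1) := by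
        rw [hc, smul_eq_mul, map_mul]; ring
      rw [this, auxQ_zero, mul_zero]
      exact Submodule.zero_mem _
    · have : auxQ (X 1) • p = c * auxQ (X 1 ^ 2) := by
        rw [hc, smul_eq_mul]
        have : auxQ (X 1 ^ 2) = auxQ (X 1) * auxQ (X 1) := by rw [← map_mul]; ring_nf
        rw [this]; ring
      rw [this]
      exact Ideal.mul_mem_left _ _ (Ideal.subset_span (by simp))

/-- In `E = ℂ[[x,y]]/(xy)`, the intersection of the ideals `([y])` and `([x+y])` equals
the ideal `([xy],[y²])`; consequently the colon ideal `(([xy],[y²]) : ([y]))` equals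
`([x],[y])`. -/
theorem stmt_2 :
    letI q := Ideal.Quotient.mk
      (Ideal.span {(MvPowerSeries.X 0 * MvPowerSeries.X 1 : MvPowerSeries (Fin 2) ℂ)})
    Ideal.span {q (MvPowerSeries.X 1)} ⊓ Ideal.span {q (MvPowerSeries.X 0 + MvPowerSeries.X 1)} =
        Ideal.span {q (MvPowerSeries.X 0 * MvPowerSeries.X 1), q (MvPowerSeries.X 1 ^ 2)} ∧
      Submodule.colon
          (Ideal.span {q (MvPowerSeries.X 0 * MvPowerSeries.X 1), q (MvPowerSeries.X 1 ^ 2)})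
          (Ideal.span {q (MvPowerSeries.X 1)}) =
        Ideal.span {q (MvPowerSeries.X 0), q (MvPowerSeries.X 1)} :=
  ⟨aux_part1, aux_part2⟩
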